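/- Let $E$ be the Mabuchi K-energy on the space $\mathcal{H}$ of Kähler potentials of a compact Kähler manifold, satisfying (i) for any $\phi_0,\phi_1\in\mathcal{H}$, $E(\phi_1)-E(\phi_0)\leq \sqrt{Ca(\phi_1)}\, d(\phi_0,\phi_1)$ where $Ca$ is the Calabi energy, and (ii) along the Calabi flow $\phi(t)$ starting at $\phi(0)$, $\frac{d}{dt}E(\phi(t))=-Ca(\phi(t))$ and $Ca(\phi(t))\leq C(t+1)^{-1/(2\alpha-1)}$ for some $\alpha\in(1/2,3/4)$. Then $E$ is bounded below on $\mathcal{H}$, and $\inf_{\mathcal{H}} E = \lim_{t\to\infty} E(\phi(t))$. -/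

import Mathlib

open Filter

/-- **Lower bound of the Mabuchi K-energy along the Calabi flow.**
Abstractly, `H` is the space of Kähler potentials with the Mabuchi distance `d`, `E` the
K-energy and `Ca` the Calabi energy, satisfying:
(i) `E φ₁ - E φ₀ ≤ √(Ca φ₁) · d(φ₀, φ₁)` for all `φ₀, φ₁`;
(ii) along the Calabi flow `φ(t)`, `dE(φ(t))/dt = -Ca(φ(t))` and
`Ca(φ(t)) ≤ C (t+1)^{-1/(2α-1)}` with `α ∈ (1/2, 3/4)`;
moreover the flow-length bound `d(φ(0), φ(t)) ≤ ∫₀ᵗ √(Ca(φ(s))) ds` holds.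
Then `E` is bounded below on `H` and `inf_H E = lim_{t→∞} E(φ(t))`. -/
theorem stmt_14 {H : Type*} (d : H → H → ℝ) (E Ca : H → ℝ)
    (hd0 : ∀ x, d x x = 0) (hdsymm : ∀ x y, d x y = d y x)
    (hdtri : ∀ x y z, d x z ≤ d x y + d y z) (hdnn : ∀ x y, 0 ≤ d x y)
    (hCann : ∀ x, 0 ≤ Ca x)
    (hconv : ∀ x y : H, E y - E x ≤ Real.sqrt (Ca y) * d x y)
    (φ : ℝ → H) (α C : ℝ) (hα₁ : 1/2 < α) (hα₂ : α < 3/4) (hC : 0 < C)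
    (hE : ∀ t : ℝ, 0 ≤ t → HasDerivAt (fun s => E (φ s)) (-(Ca (φ t))) t)
    (hCaDecay : ∀ t : ℝ, 0 ≤ t → Ca (φ t) ≤ C * (t + 1) ^ (-(1/(2*α - 1))))
    (hlen : ∀ t : ℝ, 0 ≤ t → d (φ 0) (φ t) ≤ ∫ s in (0:ℝ)..t, Real.sqrt (Ca (φ s))) :
    BddBelow (Set.range E) ∧
    ∃ L : ℝ, IsGLB (Set.range E) L ∧
      Tendsto (fun t => E (φ t)) atTop (nhds L) := by
  have hden : 0 < 2*α - 1 := by linarith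
  set p : ℝ := 1/(2*α-1) with hpdef
  have hp2 : 2 < p := by
    rw [hpdef, lt_div_iff₀ hden]; linarith
  set q : ℝ := p/2 with hqdef
  have hq1 : 1 < q := by rw [hqdef]; linarith
  set M : ℝ := Real.sqrt C / (q - 1) with hMdef
  have hM0 : 0 ≤ M := div_nonneg (Real.sqrt_nonneg _) (by linarith)
  -- pointwise bound on the square root of the Calabi energy
  have hpt : ∀ s : ℝ, 0 ≤ s → Real.sqrt (Ca (φ s)) ≤ Real.sqrt C * (s+1) ^ (-q) := by
    intro s hs
    have h1 : (0:ℝ) < s + 1 := by linarith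
    calc Real.sqrt (Ca (φ s)) ≤ Real.sqrt (C * (s+1) ^ (-p)) :=
          Real.sqrt_le_sqrt (hCaDecay s hs)
      _ = Real.sqrt C * Real.sqrt ((s+1) ^ (-p)) := Real.sqrt_mul hC.le _
      _ = Real.sqrt C * (s+1) ^ (-q) := by
          rw [show Real.sqrt ((s+1) ^ (-p)) = ((s+1) ^ (-p)) ^ ((1:ℝ)/2) from
            Real.sqrt_eq_rpow _, ← Real.rpow_mul h1.le]
          congr 1
          rw [hqdef]; ring
  -- integrability of the dominating function
  have hg_int : ∀ t : ℝ, 0 ≤ t →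
      IntervalIntegrable (fun s : ℝ => Real.sqrt C * (s+1) ^ (-q)) MeasureTheory.volume 0 t := by
    intro t ht
    apply ContinuousOn.intervalIntegrable
    apply ContinuousOn.mul continuousOn_const
    apply ContinuousOn.rpow_const (by fun_prop)
    intro x hx
    rw [Set.uIcc_of_le ht] at hx
    exact Or.inl (ne_of_gt (by linarith [hx.1] : (0:ℝ) < x + 1))
  -- bound on the integral of the dominating function
  have hint_g : ∀ t : ℝ, 0 ≤ t →
      (∫ s in (0:ℝ)..t, Real.sqrt C * (s+1) ^ (-q)) ≤ M := by
    intro t ht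
    have hF : ∀ s ∈ Set.uIcc (0:ℝ) t,
        HasDerivAt (fun x : ℝ => Real.sqrt C / (1-q) * (x+1) ^ (1-q))
          (Real.sqrt C * (s+1) ^ (-q)) s := by
      intro s hs
      rw [Set.uIcc_of_le ht] at hs
      have h1 : (0:ℝ) < s + 1 := by linarith [hs.1]
      have hd1 : HasDerivAt (fun x : ℝ => (x+1) ^ (1-q)) ((1-q) * (s+1) ^ (-q)) s := by
        have h := (Real.hasDerivAt_rpow_const (p := 1-q) (Or.inl h1.ne')).comp s
          ((hasDerivAt_id s).add_const 1)
        refine h.congr_deriv ?_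
        rw [mul_one]
        congr 1
        ring
      have h2 := hd1.const_mul (Real.sqrt C / (1-q))
      refine h2.congr_deriv ?_
      have hq0 : (1:ℝ) - q ≠ 0 := by linarith
      rw [← mul_assoc, div_mul_cancel₀ _ hq0]
    have heq := intervalIntegral.integral_eq_sub_of_hasDerivAt hF (hg_int t ht)
    rw [heq]
    have h1 : (0:ℝ) ≤ (t+1) ^ (1-q) := Real.rpow_nonneg (by linarith) _
    have h2 : ((0:ℝ)+1) ^ (1-q) = 1 := by norm_num
    have hneg : Real.sqrt C / (1-q) = -M := by
      rw [hMdef]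
      have hq0 : (1:ℝ) - q ≠ 0 := by linarith
      have hq0' : q - 1 ≠ 0 := by linarith
      field_simp
      ring
    simp only [h2, hneg]
    nlinarith [mul_nonneg hM0 h1]
  -- uniform bound on the distance along the flow
  have hlenM : ∀ t : ℝ, 0 ≤ t → d (φ 0) (φ t) ≤ M := by
    intro t ht
    refine (hlen t ht).trans ?_
    by_cases hi : IntervalIntegrable (fun s => Real.sqrt (Ca (φ s))) MeasureTheory.volume 0 t
    · refine le_trans (intervalIntegral.integral_mono_on ht hi (hg_int t ht) ?_) (hint_g t ht)
      intro s hs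
      exact hpt s hs.1
    · rw [intervalIntegral.integral_undef hi]
      exact hM0
  -- the energy along the flow is antitone
  set f : ℝ → ℝ := fun t => E (φ t) with hf
  have hanti : AntitoneOn f (Set.Ici (0:ℝ)) := by
    apply antitoneOn_of_hasDerivWithinAt_nonpos (f' := fun t => -(Ca (φ t))) (convex_Ici 0)
    · exact fun x hx => (hE x hx).continuousAt.continuousWithinAt
    · intro x hx
      rw [interior_Ici] at hx
      exact (hE x hx.le).hasDerivWithinAt
    · intro x hx
      exact neg_nonpos.mpr (hCann _)
  set g : ℝ → ℝ := fun t => f (max t 0) with hg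
  have hganti : Antitone g := fun a b hab =>
    hanti (Set.mem_Ici.mpr (le_max_right a 0)) (Set.mem_Ici.mpr (le_max_right b 0))
      (max_le_max hab le_rfl)
  -- the energy along the flow is bounded below
  have hflb : ∀ t : ℝ, 0 ≤ t → E (φ 0) - Real.sqrt (Ca (φ 0)) * M ≤ f t := by
    intro t ht
    have h1 := hconv (φ t) (φ 0)
    have h2 : d (φ t) (φ 0) ≤ M := by rw [hdsymm]; exact hlenM t ht
    have h3 : Real.sqrt (Ca (φ 0)) * d (φ t) (φ 0) ≤ Real.sqrt (Ca (φ 0)) * M :=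
      mul_le_mul_of_nonneg_left h2 (Real.sqrt_nonneg _)
    simp only [hf]
    linarith
  have hgbdd : BddBelow (Set.range g) := by
    refine ⟨E (φ 0) - Real.sqrt (Ca (φ 0)) * M, ?_⟩
    rintro _ ⟨t, rfl⟩
    exact hflb (max t 0) (le_max_right t 0)
  set L : ℝ := ⨅ t, g t with hL
  have hgL : Tendsto g atTop (nhds L) := tendsto_atTop_ciInf hganti hgbdd
  have hfL : Tendsto f atTop (nhds L) := by
    refine hgL.congr' ?_
    filter_upwards [eventually_ge_atTop (0:ℝ)] with t ht
    simp [hg, max_eq_left ht]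
  -- the square root of the Calabi energy tends to 0
  have hsq0 : Tendsto (fun t => Real.sqrt (Ca (φ t))) atTop (nhds 0) := by
    have hb : Tendsto (fun t : ℝ => Real.sqrt C * (t+1) ^ (-q)) atTop (nhds 0) := by
      have h1 : Tendsto (fun t : ℝ => t + 1) atTop atTop :=
        tendsto_atTop_add_const_right _ 1 tendsto_id
      have h2 := (tendsto_rpow_neg_atTop (by linarith : (0:ℝ) < q)).comp h1
      have h3 := h2.const_mul (Real.sqrt C)
      simpa using h3
    apply squeeze_zero' ?_ ?_ hb
    · filter_upwards with t using Real.sqrt_nonneg _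
    · filter_upwards [eventually_ge_atTop (0:ℝ)] with t ht using hpt t ht
  -- L is a lower bound for E on all of H
  have hLB : ∀ x : H, L ≤ E x := by
    intro x
    have hlim : Tendsto (fun t => f t - Real.sqrt (Ca (φ t)) * (d x (φ 0) + M)) atTop
        (nhds (L - 0 * (d x (φ 0) + M))) := hfL.sub (hsq0.mul_const _)
    have hev : ∀ᶠ t in atTop, f t - Real.sqrt (Ca (φ t)) * (d x (φ 0) + M) ≤ E x := by
      filter_upwards [eventually_ge_atTop (0:ℝ)] with t ht
      have h1 := hconv x (φ t)
      have h2 : d x (φ t) ≤ d x (φ 0) + M := (hdtri x (φ 0) (φ t)).trans (by linarith [hlenM t ht])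
      have h3 : Real.sqrt (Ca (φ t)) * d x (φ t) ≤ Real.sqrt (Ca (φ t)) * (d x (φ 0) + M) :=
        mul_le_mul_of_nonneg_left h2 (Real.sqrt_nonneg _)
      simp only [hf]
      linarith
    have := le_of_tendsto hlim hev
    simpa using this
  have hlb : L ∈ lowerBounds (Set.range E) := by
    rintro _ ⟨x, rfl⟩
    exact hLB x
  refine ⟨⟨L, hlb⟩, L, ⟨hlb, ?_⟩, hfL⟩
  intro b hb
  rw [hL]
  exact le_ciInf fun t => hb ⟨φ (max t 0), rfl⟩
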